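/- For every t ≥ 1, the subring of K generated by {λ_1^t, λ_2^t, …, λ_N^t} (i.e., the ℤ-subalgebra adjoined by these elements) equals the subring of K generated by {λ_1^1, λ_2^1, …, λ_N^1}. -/

import Mathlib

/-- The boundary conventions: `f_0^{t+1} = f_{N+1}^t` and `f_{N+2}^t = f_1^{t+1}`
(`ext N f i t` is `f_i^t` with these conventions; it is only used at `(0, t+1)` and
`(N+2, t)`). -/
def ext {K : Type*} (N : ℕ) (f : ℕ → ℕ → K) (i t : ℕ) : K :=
  if i = 0 then f (N + 1) (t - 1) else if i = N + 2 then f 1 (t + 1) else f i t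

/-- The Laurent polynomials `λ_i^t`: `λ_i^t = (z_i^t + z_{i+2}^t)/z_{i+1}^t` for
`1 ≤ i ≤ N-1` and `λ_N^t = (z_1^t z_N^t + z_2^t z_{N+1}^t + 1)/(z_1^t z_{N+1}^t)`. -/
def lam {K : Type*} [Field K] (N : ℕ) (z : ℕ → ℕ → K) (i t : ℕ) : K :=
  if i = N then (z 1 t * z N t + z 2 t * z (N + 1) t + 1) / (z 1 t * z (N + 1) t)
  else (z i t + z (i + 2) t) / z (i + 1) t

theorem stmt12 {K : Type*} [Field K] (N : ℕ) (hN : 2 ≤ N) (z : ℕ → ℕ → K)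
    (hz : ∀ i t, 1 ≤ i → i ≤ N + 1 → 1 ≤ t → z i t ≠ 0)
    (hrec : ∀ t, 1 ≤ t → ∀ i, 1 ≤ i → i ≤ N + 1 →
      z i (t + 1) * z i t = ext N z (i - 1) (t + 1) * ext N z (i + 1) t + 1) :
    ∀ t, 1 ≤ t →
      Subring.closure {w : K | ∃ i, 1 ≤ i ∧ i ≤ N ∧ w = lam N z i t} =
        Subring.closure {w : K | ∃ i, 1 ≤ i ∧ i ≤ N ∧ w = lam N z i 1} := by
  have key : ∀ t, 1 ≤ t → ∀ i, 1 ≤ i → i ≤ N →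
      lam N z i (t + 1) = lam N z (if i = N then 1 else i + 1) t := by
    intro t ht i hi1 hiN
    have extz : ∀ j s, 1 ≤ j → j ≤ N + 1 → ext N z j s = z j s := by
      intro j s h1 h2
      unfold ext
      rw [if_neg (by omega), if_neg (by omega)]
    have ext0 : ext N z 0 (t + 1) = z (N + 1) t := by
      unfold ext
      rw [if_pos rfl, Nat.add_sub_cancel]
    have extN2 : ext N z (N + 2) t = z 1 (t + 1) := by
      unfold ext
      rw [if_neg (by omega), if_pos rfl]
    have hrecA : ∀ j, 1 ≤ j → j + 1 ≤ N →
        z (j+1) (t+1) * z (j+1) t = z j (t+1) * z (j+2) t + 1 := by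
      intro j hj1 hjN
      have h := hrec t ht (j+1) (by omega) (by omega)
      rw [Nat.add_sub_cancel, extz j _ (by omega) (by omega),
        show j + 1 + 1 = j + 2 from rfl, extz (j+2) _ (by omega) (by omega)] at h
      exact h
    have hrec1 : z 1 (t+1) * z 1 t = z (N+1) t * z 2 t + 1 := by
      have h := hrec t ht 1 (by omega) (by omega)
      rw [show (1:ℕ) - 1 = 0 from rfl, ext0,
        show (1:ℕ) + 1 = 2 from rfl, extz 2 _ (by omega) (by omega)] at h
      exact h
    have hrecN1 : z (N+1) (t+1) * z (N+1) t = z N (t+1) * z 1 (t+1) + 1 := by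
      have h := hrec t ht (N+1) (by omega) (by omega)
      rw [Nat.add_sub_cancel, extz N _ (by omega) (by omega),
        show N + 1 + 1 = N + 2 from rfl, extN2] at h
      exact h
    by_cases hN' : i = N
    · rw [hN', if_pos rfl]
      have H2 := hrecA 1 (by omega) (by omega)
      norm_num at H2
      have hb1 : z 1 (t+1) ≠ 0 := hz 1 (t+1) (by omega) (by omega) (by omega)
      have hbN1 : z (N+1) (t+1) ≠ 0 := hz (N+1) (t+1) (by omega) (by omega) (by omega)
      have ha2 : z 2 t ≠ 0 := hz 2 t (by omega) (by omega) ht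
      simp only [lam, if_pos rfl, if_neg (show (1:ℕ) ≠ N by omega)]
      norm_num
      field_simp
      linear_combination (-(z (N+1) (t+1))) * hrec1 + (z (N+1) (t+1)) * H2
        - (z 2 t) * hrecN1
    · by_cases hN'' : i + 1 = N
      · subst hN''
        rw [if_neg hN']
        have HN := hrecA i (by omega) (by omega)
        have hb : z (i+1) (t+1) ≠ 0 := hz (i+1) (t+1) (by omega) (by omega) (by omega)
        have ha1 : z 1 t ≠ 0 := hz 1 t (by omega) (by omega) ht
        have ha2 : z (i+2) t ≠ 0 := hz (i+2) t (by omega) (by omega) ht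
        simp only [lam, if_pos rfl, if_neg hN', ↓reduceIte]
        field_simp
        linear_combination (-(z 1 t)) * HN + (z 1 t) * hrecN1 + (z (i+1) (t+1)) * hrec1
      · rw [if_neg hN']
        have H1 := hrecA i (by omega) (by omega)
        have H2 := hrecA (i+1) (by omega) (by omega)
        have hb : z (i+1) (t+1) ≠ 0 := hz (i+1) (t+1) (by omega) (by omega) (by omega)
        have ha : z (i+2) t ≠ 0 := hz (i+2) t (by omega) (by omega) ht
        simp only [lam, if_neg hN', if_neg (show i + 1 ≠ N from hN'')]
        field_simp
        linear_combination H2 - H1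
  have hset : ∀ t, 1 ≤ t →
      {w : K | ∃ i, 1 ≤ i ∧ i ≤ N ∧ w = lam N z i (t+1)} =
      {w : K | ∃ i, 1 ≤ i ∧ i ≤ N ∧ w = lam N z i t} := by
    intro t ht
    ext w
    simp only [Set.mem_setOf_eq]
    constructor
    · rintro ⟨i, hi1, hiN, rfl⟩
      refine ⟨if i = N then 1 else i + 1, ?_, ?_, (key t ht i hi1 hiN)⟩ <;> split <;> omega
    · rintro ⟨i, hi1, hiN, rfl⟩
      by_cases h : i = 1
      · refine ⟨N, by omega, le_rfl, ?_⟩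
        rw [key t ht N (by omega) le_rfl, if_pos rfl, h]
      · refine ⟨i - 1, by omega, by omega, ?_⟩
        rw [key t ht (i-1) (by omega) (by omega), if_neg (by omega)]
        congr 1
        omega
  refine Nat.le_induction rfl ?_
  intro n hn ih
  rw [hset n hn]
  exact ih
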